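/- Disjunction property: for any PL-formulas α, β, the formula Kh(α ∨ β) is valid if and only if Kh α is valid or Kh β is valid. -/

import Mathlib

/-- Formulas of the propositional language `PL` over atoms `P`. -/
inductive PLForm (P : Type) : Type
  | atom : P → PLForm P
  | bot  : PLForm P
  | and  : PLForm P → PLForm P → PLForm P
  | or   : PLForm P → PLForm P → PLForm P
  | imp  : PLForm P → PLForm P → PLForm P

/-- `¬α` abbreviates `α → ⊥`. -/
def PLForm.neg {P : Type} (α : PLForm P) : PLForm P := α.imp .bot

/-- The resolution space `S(α)`, realized as a type: `S(p)` and `S(⊥)` are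
singletons, `S(α∨β)` is the disjoint union, `S(α∧β)` the product, and
`S(α→β)` the full function space. -/
def RS (P : Type) : PLForm P → Type
  | .atom _  => Unit
  | .bot     => Unit
  | .or a b  => RS P a ⊕ RS P b
  | .and a b => RS P a × RS P b
  | .imp a b => RS P a → RS P b

/-- An epistemic (information) model over atoms `P` with worlds `W`:
`W` is nonempty and `V` a valuation. -/
structure Model (P W : Type) where
  ne : Nonempty W
  V : W → Set P

/-- The actual resolutions `R(w,α) ⊆ S(α)` at a world `w`. -/
def Res {P W : Type} (M : Model P W) (w : W) : (α : PLForm P) → Set (RS P α)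
  | .atom p  => {_u : Unit | p ∈ M.V w}
  | .bot     => ∅
  | .or a b  => (Sum.inl '' Res M w a) ∪ (Sum.inr '' Res M w b)
  | .and a b => (Res M w a) ×ˢ (Res M w b)
  | .imp a b => {f : RS P a → RS P b | f '' Res M w a ⊆ Res M w b}

/-- Formulas of the dynamic epistemic language `DELKh`. -/
inductive DForm (P : Type) : Type
  | atom : P → DForm P
  | bot  : DForm P
  | and  : DForm P → DForm P → DForm P
  | or   : DForm P → DForm P → DForm P
  | imp  : DForm P → DForm P → DForm P
  | K    : DForm P → DForm P
  | box  : DForm P → DForm P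
  | kh   : PLForm P → DForm P

def DForm.neg {P : Type} (φ : DForm P) : DForm P := φ.imp .bot
def DForm.dia {P : Type} (φ : DForm P) : DForm P := (DForm.box φ.neg).neg
def DForm.biImp {P : Type} (φ ψ : DForm P) : DForm P := (φ.imp ψ).and (ψ.imp φ)

/-- Embedding of `PL` into `DELKh`. -/
def PLForm.toD {P : Type} : PLForm P → DForm P
  | .atom p  => .atom p
  | .bot     => .bot
  | .and a b => (toD a).and (toD b)
  | .or a b  => (toD a).or (toD b)
  | .imp a b => (toD a).imp (toD b)

/-- The submodel of `M` determined by a nonempty set `s` of worlds,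
with the restricted valuation. -/
def Model.restrict {P W : Type} (M : Model P W) (s : Set W) (h : s.Nonempty) :
    Model P s :=
  { ne := ⟨⟨h.choose, h.choose_spec⟩⟩, V := fun w => M.V w.1 }

/-- Satisfaction of `DELKh`-formulas at a pointed model `(M,w)`. -/
def Sat (P : Type) : (W : Type) → Model P W → W → DForm P → Prop
  | _, M, w, .atom p  => p ∈ M.V w
  | _, _, _, .bot     => False
  | W, M, w, .and a b => Sat P W M w a ∧ Sat P W M w b
  | W, M, w, .or a b  => Sat P W M w a ∨ Sat P W M w b
  | W, M, w, .imp a b => Sat P W M w a → Sat P W M w b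
  | W, M, _, .K φ     => ∀ v : W, Sat P W M v φ
  | W, M, w, .box φ   =>
      ∀ (s : Set W) (h : w ∈ s), Sat P s (M.restrict s ⟨w, h⟩) ⟨w, h⟩ φ
  | W, M, _, .kh α    => ∃ x : RS P α, ∀ v : W, x ∈ Res M v α

/-- A `DELKh`-formula is valid if it holds at every pointed model. -/
def Valid {P : Type} (φ : DForm P) : Prop :=
  ∀ (W : Type) (M : Model P W) (w : W), Sat P W M w φ

/-- Semantic entailment from a set of `DELKh`-formulas. -/
def EntailsSet {P : Type} (Γ : Set (DForm P)) (φ : DForm P) : Prop :=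
  ∀ (W : Type) (M : Model P W) (w : W),
    (∀ ψ ∈ Γ, Sat P W M w ψ) → Sat P W M w φ

/-- Classical satisfaction of `PL`-formulas at a pointed model. -/
def PLSat {P W : Type} (M : Model P W) (w : W) : PLForm P → Prop
  | .atom p  => p ∈ M.V w
  | .bot     => False
  | .and a b => PLSat M w a ∧ PLSat M w b
  | .or a b  => PLSat M w a ∨ PLSat M w b
  | .imp a b => PLSat M w a → PLSat M w b

/-- Inquisitive support of `PL`-formulas at a state `s` of a model `M`. -/
def Support (P W : Type) (M : Model P W) : Set W → PLForm P → Prop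
  | s, .atom p  => ∀ w ∈ s, p ∈ M.V w
  | s, .bot     => s = ∅
  | s, .and a b => Support P W M s a ∧ Support P W M s b
  | s, .or a b  => Support P W M s a ∨ Support P W M s b
  | s, .imp a b => ∀ t ⊆ s, Support P W M t a → Support P W M t b

/-- `Res` depends only on the local valuation. -/
lemma res_congr {P W W' : Type} (M : Model P W) (M' : Model P W') (w : W) (w' : W')
    (h : M.V w = M'.V w') : ∀ α : PLForm P, Res M w α = Res M' w' α := by
  intro α
  induction α with
  | atom p => simp [Res, h]
  | bot => rfl
  | and a b iha ihb => simp [Res, iha, ihb]; rfl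
  | or a b iha ihb => simp [Res, iha, ihb]
  | imp a b iha ihb => simp [Res, iha, ihb]

/-- disjunction property: `Kh(α∨β)` is valid iff
`Kh α` is valid or `Kh β` is valid. -/
theorem kh_disjunction_property {P : Type} [Countable P] (α β : PLForm P) :
    Valid (DForm.kh (α.or β)) ↔ (Valid (DForm.kh α) ∨ Valid (DForm.kh β)) := by
  constructor
  · intro hv
    by_contra hc
    push_neg at hc
    obtain ⟨ha, hb⟩ := hc
    simp only [Valid, Sat, not_forall, not_exists] at ha hb
    obtain ⟨W₁, M₁, w₁, h₁⟩ := ha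
    obtain ⟨W₂, M₂, w₂, h₂⟩ := hb
    set Msum : Model P (W₁ ⊕ W₂) := ⟨⟨Sum.inl w₁⟩, Sum.elim M₁.V M₂.V⟩ with hM
    obtain ⟨x, hx⟩ := hv (W₁ ⊕ W₂) Msum (Sum.inl w₁)
    cases x with
    | inl xa =>
      obtain ⟨v, hv1⟩ := h₁ xa
      have := hx (Sum.inl v)
      simp only [Res] at this
      rcases this with ⟨y, hy, hy'⟩ | ⟨y, _, hy'⟩
      · cases hy'
        rw [res_congr Msum M₁ (Sum.inl v) v rfl α] at hy
        exact hv1 hy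
      · cases hy'
    | inr xb =>
      obtain ⟨v, hv2⟩ := h₂ xb
      have := hx (Sum.inr v)
      simp only [Res] at this
      rcases this with ⟨y, _, hy'⟩ | ⟨y, hy, hy'⟩
      · cases hy'
      · cases hy'
        rw [res_congr Msum M₂ (Sum.inr v) v rfl β] at hy
        exact hv2 hy
  · rintro (h | h) W M w
    · obtain ⟨x, hx⟩ := h W M w
      exact ⟨Sum.inl x, fun v => Or.inl ⟨x, hx v, rfl⟩⟩
    · obtain ⟨x, hx⟩ := h W M w
      exact ⟨Sum.inr x, fun v => Or.inr ⟨x, hx v, rfl⟩⟩
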